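/- There exist δ ∈ (0,1) and a function f : ℂ → ℂ complex-differentiable on the open ball B(0,δ), with f(x) ∈ ℝ for every real x ∈ B(0,δ), f(0) = 0, and f'(0) = −4, such that for every z ∈ B(0,δ) with z ∉ [0,∞) one has f(z) ∉ (−∞,0] and f(z)^{1/2} = −(1/2)·φ_→(z). -/

import Mathlib

open Complex Metric

/-- `φ_→(z) = 2z·∫_0^1 (1−tz)^{1/2}·(−tz)^{−1/2} dt`, the integral of
`2(1−s)^{1/2}(−s)^{−1/2}` over the straight segment from `0` to `z` (principal powers). -/
noncomputable def phiRight (z : ℂ) : ℂ :=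
  2 * z *
    ∫ t in (0:ℝ)..1, (1 - (t : ℂ) * z) ^ ((1 : ℂ)/2) * (-((t : ℂ) * z)) ^ (-((1 : ℂ)/2))

open intervalIntegral

noncomputable def hAux (z : ℂ) : ℂ :=
  ∫ t in (0:ℝ)..1, (1 - (t : ℂ) * z) ^ ((1 : ℂ)/2) * (t : ℂ) ^ (-((1 : ℂ)/2))

lemma sq_half {z : ℂ} (hz : z ≠ 0) : z ^ ((1:ℂ)/2) * z ^ ((1:ℂ)/2) = z := by
  rw [Complex.cpow_def_of_ne_zero hz, ← Complex.exp_add,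
    show Complex.log z * ((1:ℂ)/2) + Complex.log z * ((1:ℂ)/2) = Complex.log z by ring,
    Complex.exp_log hz]

lemma re_half_pos {z : ℂ} (hz : z ∈ Complex.slitPlane) : 0 < (z ^ ((1:ℂ)/2)).re := by
  rw [Complex.cpow_def_of_ne_zero (Complex.slitPlane_ne_zero hz), Complex.exp_re]
  apply mul_pos (Real.exp_pos _)
  apply Real.cos_pos_of_mem_Ioo
  have h1 := Complex.neg_pi_lt_arg z
  have h2 := (Complex.arg_le_pi z).lt_of_ne (Complex.slitPlane_arg_ne_pi hz)
  have him : (Complex.log z * ((1:ℂ)/2)).im = z.arg / 2 := by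
    simp [Complex.mul_im, Complex.log_im, Complex.log_re]
    ring
  rw [him]
  constructor <;> [linarith; linarith]

lemma sqrt_near_one {ζ : ℂ} (h : ‖ζ - 1‖ ≤ 1/2) :
    ‖ζ ^ ((1:ℂ)/2) - 1‖ ≤ ‖ζ - 1‖ ∧
      (1:ℝ)/2 ≤ (ζ ^ ((1:ℂ)/2)).re ∧ |(ζ ^ ((1:ℂ)/2)).im| ≤ |ζ.im| := by
  have hre : (1:ℝ)/2 ≤ ζ.re := by
    have h1 : |(ζ - 1).re| ≤ ‖ζ - 1‖ := Complex.abs_re_le_norm _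
    rw [Complex.sub_re, Complex.one_re] at h1
    have := abs_le.mp (h1.trans h)
    linarith [this.1]
  have hζ0 : ζ ≠ 0 := by
    intro h0; rw [h0] at hre; norm_num at hre
  have hsp : ζ ∈ Complex.slitPlane := Complex.mem_slitPlane_iff.mpr (Or.inl (by linarith))
  set s := ζ ^ ((1:ℂ)/2) with hs
  have hss : s * s = ζ := sq_half hζ0
  have hsre : 0 < s.re := re_half_pos hsp
  have h1 : (1:ℝ) ≤ ‖s + 1‖ := by
    have : (1:ℝ) ≤ (s + 1).re := by simp [Complex.add_re]; linarith
    exact this.trans (Complex.re_le_norm _)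
  have key : ‖s - 1‖ ≤ ‖ζ - 1‖ := by
    have hfac : (s - 1) * (s + 1) = ζ - 1 := by rw [← hss]; ring
    calc ‖s - 1‖ = ‖s - 1‖ * 1 := (mul_one _).symm
      _ ≤ ‖s - 1‖ * ‖s + 1‖ := by gcongr
      _ = ‖ζ - 1‖ := by rw [← norm_mul, hfac]
  have hsre2 : (1:ℝ)/2 ≤ s.re := by
    have h1' : |(s - 1).re| ≤ ‖s - 1‖ := Complex.abs_re_le_norm _
    rw [Complex.sub_re, Complex.one_re] at h1'
    have := abs_le.mp (h1'.trans (key.trans h))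
    linarith [this.1]
  refine ⟨key, hsre2, ?_⟩
  have him_eq : ζ.im = 2 * s.re * s.im := by
    rw [← hss]; simp [Complex.mul_im]; ring
  rw [him_eq, abs_mul, _root_.abs_of_nonneg (by linarith : (0:ℝ) ≤ 2 * s.re)]
  nlinarith [abs_nonneg s.im]

lemma cpow_int : IntervalIntegrable (fun t : ℝ => (t:ℂ) ^ (-((1:ℂ)/2)))
    MeasureTheory.volume 0 1 := by
  apply intervalIntegrable_cpow'
  norm_num

lemma base_re {z : ℂ} (hz : ‖z‖ ≤ 1/2) {t : ℝ} (ht0 : 0 ≤ t) (ht1 : t ≤ 1) :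
    (1:ℝ)/2 ≤ (1 - (t:ℂ)*z).re := by
  have h1 : ‖(t:ℂ)*z‖ ≤ 1/2 := by
    rw [norm_mul, Complex.norm_real, Real.norm_eq_abs, _root_.abs_of_nonneg ht0]
    calc t * ‖z‖ ≤ 1 * (1/2) := by
          apply mul_le_mul ht1 hz (norm_nonneg z) zero_le_one
      _ = 1/2 := by norm_num
  have h2 : |((t:ℂ)*z).re| ≤ 1/2 := (Complex.abs_re_le_norm _).trans h1
  rw [Complex.sub_re, Complex.one_re]
  linarith [(abs_le.mp h2).2]

lemma near_one {z : ℂ} (hz : ‖z‖ ≤ 1/2) {t : ℝ} (ht0 : 0 ≤ t) (ht1 : t ≤ 1) :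
    ‖(1 - (t:ℂ)*z) - 1‖ ≤ 1/2 ∧ ‖(1 - (t:ℂ)*z) - 1‖ = t * ‖z‖ := by
  have h0 : (1 - (t:ℂ)*z) - 1 = -((t:ℂ)*z) := by ring
  rw [h0, norm_neg, norm_mul, Complex.norm_real, Real.norm_eq_abs, _root_.abs_of_nonneg ht0]
  refine ⟨?_, rfl⟩
  have : t * ‖z‖ ≤ 1 * (1/2) := mul_le_mul ht1 hz (norm_nonneg z) zero_le_one
  linarith

lemma contF {z : ℂ} (hz : ‖z‖ ≤ 1/2) :
    ContinuousOn (fun t : ℝ => (1 - (t : ℂ) * z) ^ ((1 : ℂ)/2)) (Set.uIcc 0 1) := by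
  apply ContinuousOn.cpow_const
  · exact (continuous_const.sub (Complex.continuous_ofReal.mul continuous_const)).continuousOn
  · intro t ht
    rw [Set.uIcc_of_le (zero_le_one' ℝ)] at ht
    exact Complex.mem_slitPlane_iff.mpr (Or.inl (by linarith [base_re hz ht.1 ht.2]))

lemma intF {z : ℂ} (hz : ‖z‖ ≤ 1/2) :
    IntervalIntegrable (fun t : ℝ => (1 - (t : ℂ) * z) ^ ((1 : ℂ)/2) * (t : ℂ) ^ (-((1 : ℂ)/2)))
      MeasureTheory.volume 0 1 :=
  cpow_int.continuousOn_mul (contF hz)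

lemma int_two : (∫ t in (0:ℝ)..1, (t:ℂ) ^ (-((1:ℂ)/2))) = 2 := by
  rw [integral_cpow (Or.inl (by norm_num))]
  rw [show -((1:ℂ)/2) + 1 = 1/2 by ring]
  rw [Complex.ofReal_one, Complex.one_cpow, Complex.ofReal_zero,
    Complex.zero_cpow (by norm_num : (1:ℂ)/2 ≠ 0)]
  norm_num

lemma abs_tpow {t : ℝ} (ht : 0 < t) :
    ‖(t:ℂ) ^ (-((1:ℂ)/2))‖ = t ^ (-(1/2) : ℝ) := by
  rw [Complex.norm_cpow_eq_rpow_re_of_pos ht]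
  norm_num

lemma t_mul_tpow {t : ℝ} (ht : 0 < t) (ht1 : t ≤ 1) :
    t * t ^ (-(1/2) : ℝ) ≤ 1 := by
  have h1 : t * t ^ (-(1/2) : ℝ) = t ^ ((1/2) : ℝ) := by
    nth_rewrite 1 [← Real.rpow_one t]
    rw [← Real.rpow_add ht]
    norm_num
  rw [h1]
  exact Real.rpow_le_one ht.le ht1 (by norm_num)

lemma hAux_zero : hAux 0 = 2 := by
  unfold hAux
  simp only [mul_zero, sub_zero, Complex.one_cpow, one_mul]
  exact int_two

lemma hAux_sub_two {z : ℂ} (hz : ‖z‖ ≤ 1/4) :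
    ‖hAux z - 2‖ ≤ ‖z‖ := by
  have hz2 : ‖z‖ ≤ 1/2 := hz.trans (by norm_num)
  have h2 : hAux z - 2 =
      ∫ t in (0:ℝ)..1, ((1 - (t:ℂ)*z) ^ ((1:ℂ)/2) - 1) * (t:ℂ) ^ (-((1:ℂ)/2)) := by
    rw [show (fun t:ℝ => ((1 - (t:ℂ)*z) ^ ((1:ℂ)/2) - 1) * (t:ℂ) ^ (-((1:ℂ)/2)))
        = fun t:ℝ => (1 - (t:ℂ)*z) ^ ((1:ℂ)/2) * (t:ℂ) ^ (-((1:ℂ)/2)) - (t:ℂ) ^ (-((1:ℂ)/2))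
      from funext fun t => by ring]
    rw [intervalIntegral.integral_sub (intF hz2) cpow_int, int_two]
    rfl
  rw [h2]
  have hb := intervalIntegral.norm_integral_le_of_norm_le_const
    (C := ‖z‖) (a := (0:ℝ)) (b := 1)
    (f := fun t:ℝ => ((1 - (t:ℂ)*z) ^ ((1:ℂ)/2) - 1) * (t:ℂ) ^ (-((1:ℂ)/2))) ?_
  · simpa using hb
  · intro t ht
    rw [Set.uIoc_of_le (zero_le_one' ℝ)] at ht
    obtain ⟨ht0, ht1⟩ := ht
    have hn := near_one hz2 ht0.le ht1
    have hs := sqrt_near_one hn.1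
    rw [norm_mul, abs_tpow ht0]
    calc ‖(1 - (t:ℂ)*z) ^ ((1:ℂ)/2) - 1‖ * t ^ (-(1/2):ℝ)
        ≤ (t * ‖z‖) * t ^ (-(1/2):ℝ) := by
          apply mul_le_mul_of_nonneg_right (hs.1.trans (le_of_eq hn.2))
            (Real.rpow_nonneg ht0.le _)
      _ = ‖z‖ * (t * t ^ (-(1/2):ℝ)) := by ring
      _ ≤ ‖z‖ * 1 := by
          apply mul_le_mul_of_nonneg_left (t_mul_tpow ht0 ht1) (norm_nonneg z)
      _ = ‖z‖ := mul_one _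

lemma hAux_im {z : ℂ} (hz : ‖z‖ ≤ 1/4) : |(hAux z).im| ≤ |z.im| := by
  have hz2 : ‖z‖ ≤ 1/2 := hz.trans (by norm_num)
  have hInt := intF hz2
  have him : (hAux z).im =
      ∫ t in (0:ℝ)..1, ((1 - (t:ℂ)*z) ^ ((1:ℂ)/2) * (t:ℂ) ^ (-((1:ℂ)/2))).im := by
    unfold hAux
    rw [intervalIntegral.integral_of_le (zero_le_one' ℝ),
      intervalIntegral.integral_of_le (zero_le_one' ℝ)]
    simpa using (integral_im hInt.1).symm
  have him2 : (hAux z).im =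
      ∫ t in (0:ℝ)..1, ((1 - (t:ℂ)*z) ^ ((1:ℂ)/2)).im * t ^ (-(1/2) : ℝ) := by
    rw [him]
    apply intervalIntegral.integral_congr
    intro t ht
    rw [Set.uIcc_of_le (zero_le_one' ℝ)] at ht
    have : (t:ℂ) ^ (-((1:ℂ)/2)) = ((t ^ (-(1/2):ℝ) : ℝ) : ℂ) := by
      rw [Complex.ofReal_cpow ht.1 (-(1/2):ℝ)]
      norm_num
    simp only [this, Complex.mul_im, Complex.ofReal_im, Complex.ofReal_re, mul_zero, add_zero, zero_add, zero_mul]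
  rw [him2, ← Real.norm_eq_abs]
  have hb := intervalIntegral.norm_integral_le_of_norm_le_const
    (C := |z.im|) (a := (0:ℝ)) (b := 1)
    (f := fun t:ℝ => ((1 - (t:ℂ)*z) ^ ((1:ℂ)/2)).im * t ^ (-(1/2) : ℝ)) ?_
  · simpa using hb
  · intro t ht
    rw [Set.uIoc_of_le (zero_le_one' ℝ)] at ht
    obtain ⟨ht0, ht1⟩ := ht
    have hn := near_one hz2 ht0.le ht1
    have hs := sqrt_near_one hn.1
    have him_base : |(1 - (t:ℂ)*z).im| = t * |z.im| := by
      simp [Complex.sub_im, Complex.mul_im, abs_mul, _root_.abs_of_nonneg ht0.le]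
    rw [Real.norm_eq_abs, abs_mul, _root_.abs_of_nonneg (Real.rpow_nonneg ht0.le _)]
    calc |((1 - (t:ℂ)*z) ^ ((1:ℂ)/2)).im| * t ^ (-(1/2):ℝ)
        ≤ (t * |z.im|) * t ^ (-(1/2):ℝ) := by
          apply mul_le_mul_of_nonneg_right (hs.2.2.trans (le_of_eq him_base))
            (Real.rpow_nonneg ht0.le _)
      _ = |z.im| * (t * t ^ (-(1/2):ℝ)) := by ring
      _ ≤ |z.im| * 1 := mul_le_mul_of_nonneg_left (t_mul_tpow ht0 ht1) (abs_nonneg _)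
      _ = |z.im| := mul_one _

lemma hAux_deriv {z₀ : ℂ} (hz₀ : ‖z₀‖ < 1/4) :
    HasDerivAt hAux
      (∫ t in (0:ℝ)..1,
        ((1:ℂ)/2 * (1 - (t:ℂ)*z₀) ^ ((1:ℂ)/2 - 1) * (-(t:ℂ))) * (t:ℂ) ^ (-((1:ℂ)/2))) z₀ := by
  set ε : ℝ := 1/4 - ‖z₀‖ with hε
  have hεpos : 0 < ε := by rw [hε]; linarith
  have hball : ∀ x ∈ ball z₀ ε, ‖x‖ ≤ 1/4 := by
    intro x hx
    rw [mem_ball, Complex.dist_eq] at hx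
    calc ‖x‖ = ‖x - z₀ + z₀‖ := by ring_nf
      _ ≤ ‖x - z₀‖ + ‖z₀‖ := norm_add_le _ _
      _ ≤ 1/4 := by rw [hε] at hx; linarith
  have key := intervalIntegral.hasDerivAt_integral_of_dominated_loc_of_deriv_le
    (F := fun (z : ℂ) (t : ℝ) => (1 - (t:ℂ)*z) ^ ((1:ℂ)/2) * (t:ℂ) ^ (-((1:ℂ)/2)))
    (F' := fun (z : ℂ) (t : ℝ) =>
      ((1:ℂ)/2 * (1 - (t:ℂ)*z) ^ ((1:ℂ)/2 - 1) * (-(t:ℂ))) * (t:ℂ) ^ (-((1:ℂ)/2)))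
    (bound := fun _ => 1) (a := (0:ℝ)) (b := 1) (μ := MeasureTheory.volume) (x₀ := z₀)
    (ball_mem_nhds z₀ hεpos) ?meas ?int ?meas' ?bound ?bint ?diff
  · exact key.2
  case meas =>
    have hmem : ∀ᶠ x in nhds z₀, x ∈ ball (0:ℂ) (1/2) := by
      apply IsOpen.eventually_mem isOpen_ball
      rw [mem_ball, Complex.dist_eq, sub_zero]
      linarith
    filter_upwards [hmem] with x hx
    have hx2 : ‖x‖ ≤ 1/2 := by
      rw [mem_ball, Complex.dist_eq, sub_zero] at hx; exact hx.le
    have := (intF hx2).1.aestronglyMeasurable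
    rwa [Set.uIoc_of_le (zero_le_one' ℝ)]
  case int => exact intF ((hball z₀ (mem_ball_self hεpos)).trans (by norm_num))
  case meas' =>
    have hcont : ContinuousOn
        (fun t : ℝ => (1:ℂ)/2 * (1 - (t:ℂ)*z₀) ^ ((1:ℂ)/2 - 1) * (-(t:ℂ))) (Set.uIcc 0 1) := by
      apply ContinuousOn.mul
      · apply ContinuousOn.mul continuousOn_const
        apply ContinuousOn.cpow_const
        · exact (continuous_const.sub (Complex.continuous_ofReal.mul continuous_const)).continuousOn
        · intro t ht
          rw [Set.uIcc_of_le (zero_le_one' ℝ)] at ht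
          exact Complex.mem_slitPlane_iff.mpr (Or.inl (by
            linarith [base_re (le_trans hz₀.le (by norm_num)) ht.1 ht.2]))
      · exact (Complex.continuous_ofReal.neg).continuousOn
    have := (cpow_int.continuousOn_mul hcont).1.aestronglyMeasurable
    rwa [Set.uIoc_of_le (zero_le_one' ℝ)]
  case bound =>
    apply Filter.Eventually.of_forall
    intro t ht x hx
    rw [Set.uIoc_of_le (zero_le_one' ℝ)] at ht
    obtain ⟨ht0, ht1⟩ := ht
    have hx4 : ‖x‖ ≤ 1/4 := hball x hx
    have hn := near_one (hx4.trans (by norm_num)) ht0.le ht1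
    have hs := sqrt_near_one hn.1
    have habs_inv : ‖(1 - (t:ℂ)*x) ^ ((1:ℂ)/2 - 1)‖ ≤ 2 := by
      rw [show (1:ℂ)/2 - 1 = -((1:ℂ)/2) by ring, Complex.cpow_neg, norm_inv]
      have h1 : (1:ℝ)/2 ≤ ‖(1 - (t:ℂ)*x) ^ ((1:ℂ)/2)‖ :=
        hs.2.1.trans (Complex.re_le_norm _)
      rw [inv_le_comm₀ (by linarith) (by norm_num)]
      linarith
    calc ‖((1:ℂ)/2 * (1 - (t:ℂ)*x) ^ ((1:ℂ)/2 - 1) * (-(t:ℂ)))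
          * (t:ℂ) ^ (-((1:ℂ)/2))‖
        = (1/2) * ‖(1 - (t:ℂ)*x) ^ ((1:ℂ)/2 - 1)‖ * t * t ^ (-(1/2):ℝ) := by
          rw [norm_mul, norm_mul, norm_mul, norm_neg, Complex.norm_real, Real.norm_eq_abs,
            _root_.abs_of_nonneg ht0.le, abs_tpow ht0]
          norm_num
      _ ≤ (1/2) * 2 * t * t ^ (-(1/2):ℝ) := by
          apply mul_le_mul_of_nonneg_right
          apply mul_le_mul_of_nonneg_right
          · apply mul_le_mul_of_nonneg_left habs_inv (by norm_num)
          · exact ht0.le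
          · exact Real.rpow_nonneg ht0.le _
      _ = t * t ^ (-(1/2):ℝ) := by ring
      _ ≤ 1 := t_mul_tpow ht0 ht1
  case bint => exact intervalIntegrable_const
  case diff =>
    apply Filter.Eventually.of_forall
    intro t ht x hx
    rw [Set.uIoc_of_le (zero_le_one' ℝ)] at ht
    have hx4 : ‖x‖ ≤ 1/4 := hball x hx
    have hbase : HasDerivAt (fun x : ℂ => 1 - (t:ℂ)*x) (-(t:ℂ)) x := by
      simpa using ((hasDerivAt_id x).const_mul (t:ℂ)).const_sub 1
    have hslit : (1 - (t:ℂ)*x) ∈ Complex.slitPlane := by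
      apply Complex.mem_slitPlane_iff.mpr
      exact Or.inl (by linarith [base_re (hx4.trans (by norm_num)) ht.1.le ht.2])
    exact (hbase.cpow_const hslit).mul_const _

lemma sq_sqrt' {w : ℂ} (hw : 0 < w.re) : (w * w) ^ ((1:ℂ)/2) = w := by
  have hw0 : w ≠ 0 := fun h => by simp [h] at hw
  have harg : |w.arg| < Real.pi/2 := Complex.abs_arg_lt_pi_div_two_iff.mpr (Or.inl hw)
  have hmem : w.arg + w.arg ∈ Set.Ioc (-Real.pi) Real.pi := by
    have := abs_lt.mp harg
    constructor <;> [linarith [this.1]; linarith [this.2]]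
  have hlog : Complex.log (w * w) = Complex.log w + Complex.log w :=
    Complex.log_mul hw0 hw0 hmem
  rw [Complex.cpow_def_of_ne_zero (mul_ne_zero hw0 hw0), hlog,
    show (Complex.log w + Complex.log w) * ((1:ℂ)/2) = Complex.log w by ring,
    Complex.exp_log hw0]

lemma mul_cpow_pos {t : ℝ} (ht : 0 < t) {u : ℂ} (hu : u ≠ 0) (c : ℂ) :
    ((t:ℂ) * u) ^ c = (t:ℂ) ^ c * u ^ c := by
  have ht0 : (t:ℂ) ≠ 0 := by exact_mod_cast ht.ne'
  rw [Complex.cpow_def_of_ne_zero (mul_ne_zero ht0 hu), Complex.cpow_def_of_ne_zero ht0,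
    Complex.cpow_def_of_ne_zero hu, Complex.log_ofReal_mul ht hu, add_mul, Complex.exp_add,
    Complex.ofReal_log ht.le]

/-- There are `δ ∈ (0,1)` and a function `f` analytic on `B(0,δ)`, real on
real points, with `f(0) = 0`, `f'(0) = −4`, such that off the cut `[0,∞)` the value `f(z)`
avoids `(−∞,0]` and `f(z)^{1/2} = −(1/2) φ_→(z)`. -/
theorem stmt_5 :
    ∃ δ : ℝ, 0 < δ ∧ δ < 1 ∧
      ∃ f : ℂ → ℂ, DifferentiableOn ℂ f (ball (0 : ℂ) δ) ∧
        (∀ x : ℝ, (x : ℂ) ∈ ball (0 : ℂ) δ → (f x).im = 0) ∧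
        f 0 = 0 ∧ deriv f 0 = -4 ∧
        ∀ z ∈ ball (0 : ℂ) δ, z ∉ (Complex.ofReal '' Set.Ici 0) →
          f z ∉ (Complex.ofReal '' Set.Iic 0) ∧
          (f z) ^ ((1 : ℂ)/2) = -(1/2 : ℂ) * phiRight z := by
  refine ⟨1/4, by norm_num, by norm_num, fun z => -z * (hAux z)^2, ?_, ?_, ?_, ?_, ?_⟩
  · -- differentiability
    intro z hz
    rw [mem_ball_zero_iff] at hz
    exact ((differentiableAt_id.neg).mul
      ((hAux_deriv hz).differentiableAt.pow 2)).differentiableWithinAt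
  · -- real on reals
    intro x hx
    rw [mem_ball_zero_iff] at hx
    have h1 : (hAux x).im = 0 := by
      have := hAux_im (z := (x:ℂ)) hx.le
      simpa using this
    simp [pow_two, Complex.mul_im, Complex.mul_re, h1]
  · simp
  · -- derivative at 0
    have hd := hAux_deriv (z₀ := 0) (by simp)
    have hf : HasDerivAt (fun z : ℂ => -z * (hAux z)^2)
        (-1 * (hAux 0)^2 + -(0:ℂ) * ((2:ℕ) * (hAux 0)^(2-1) *
          (∫ t in (0:ℝ)..1,
            ((1:ℂ)/2 * (1 - (t:ℂ)*0) ^ ((1:ℂ)/2 - 1) * (-(t:ℂ))) * (t:ℂ) ^ (-((1:ℂ)/2))))) 0 := by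
      exact (hasDerivAt_neg 0).mul (hd.pow 2)
    rw [hf.deriv, hAux_zero]
    norm_num
  · -- main identity
    intro z hz hcut
    rw [mem_ball_zero_iff] at hz
    have hsp : -z ∈ Complex.slitPlane := by
      rw [Complex.mem_slitPlane_iff]
      by_contra hcon
      push_neg at hcon
      obtain ⟨h1, h2⟩ := hcon
      apply hcut
      refine ⟨z.re, ?_, ?_⟩
      · simp only [Set.mem_Ici]
        have : (-z).re = -z.re := Complex.neg_re z
        linarith [h1, this ▸ h1]
      · apply Complex.ext
        · simp
        · simp only [Complex.ofReal_im]
          have : (-z).im = -z.im := Complex.neg_im z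
          rw [this] at h2
          linarith
    have huz : -z ≠ 0 := Complex.slitPlane_ne_zero hsp
    set s : ℂ := (-z) ^ ((1:ℂ)/2) with hsdef
    have hss : s * s = -z := sq_half huz
    have ha : 0 < s.re := re_half_pos hsp
    have hs0 : s ≠ 0 := fun h => by rw [h] at ha; simp at ha
    have hnormsq : s.re^2 + s.im^2 < 1/4 := by
      have h1 : ‖s‖ ^ 2 = ‖-z‖ := by
        rw [sq, ← norm_mul, hss]
      have h2 : Complex.normSq s < 1/4 := by
        rw [← Complex.sq_norm, h1, norm_neg]; exact hz
      have := Complex.normSq_apply s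
      nlinarith [h2, this]
    have hyim : z.im = -(2 * s.re * s.im) := by
      have : (-z).im = s.re * s.im + s.im * s.re := by rw [← hss]; exact Complex.mul_im s s
      have h2 : (-z).im = -z.im := Complex.neg_im z
      nlinarith [this, h2]
    set H : ℂ := hAux z with hHdef
    have hH4 : ‖H - 2‖ ≤ 1/4 := (hAux_sub_two hz.le).trans hz.le
    have hHre : (7:ℝ)/4 ≤ H.re := by
      have h1 : |(H - 2).re| ≤ ‖H - 2‖ := Complex.abs_re_le_norm _
      have h2 : (H - 2).re = H.re - 2 := by simp [Complex.sub_re]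
      rw [h2] at h1
      have := abs_le.mp (h1.trans hH4)
      linarith [this.1]
    have hHim : |H.im| ≤ 2 * s.re * |s.im| := by
      have h1 := hAux_im hz.le
      rw [hyim] at h1
      calc |H.im| ≤ |(-(2 * s.re * s.im))| := h1
        _ = 2 * s.re * |s.im| := by
            rw [abs_neg, abs_mul, _root_.abs_of_nonneg (by linarith : (0:ℝ) ≤ 2 * s.re)]
    set w : ℂ := s * H with hwdef
    have hwre : 0 < w.re := by
      have h1 : w.re = s.re * H.re - s.im * H.im := Complex.mul_re s H
      have h2 : s.im * H.im ≤ 2 * s.re * s.im^2 := by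
        calc s.im * H.im ≤ |s.im * H.im| := le_abs_self _
          _ = |s.im| * |H.im| := abs_mul _ _
          _ ≤ |s.im| * (2 * s.re * |s.im|) :=
              mul_le_mul_of_nonneg_left hHim (abs_nonneg _)
          _ = 2 * s.re * s.im^2 := by rw [← _root_.sq_abs s.im]; ring
      nlinarith [hnormsq, ha, hHre, h2, sq_nonneg s.im]
    have hfzw : -z * (hAux z)^2 = w * w := by
      rw [hwdef, hHdef, ← hss]; ring
    constructor
    · rintro ⟨r, hr, hre⟩
      rw [Set.mem_Iic] at hr
      have h1 : w * w = (r:ℂ) := by rw [← hfzw]; exact hre.symm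
      have h2 : (w*w).im = 0 := by rw [h1]; simp
      have h3 : (w*w).im = w.re * w.im + w.im * w.re := Complex.mul_im w w
      have h4 : w.im = 0 := by nlinarith [h2, h3, hwre]
      have h5 : (w*w).re = r := by rw [h1]; simp
      have h6 : (w*w).re = w.re * w.re - w.im * w.im := Complex.mul_re w w
      nlinarith [h5, h6, h4, hwre, hr]
    · -- compute phiRight
      have hint : (∫ t in (0:ℝ)..1,
            (1 - (t:ℂ)*z) ^ ((1:ℂ)/2) * (-((t:ℂ) * z)) ^ (-((1:ℂ)/2)))
          = (∫ t in (0:ℝ)..1, (1 - (t:ℂ)*z) ^ ((1:ℂ)/2) * (t:ℂ) ^ (-((1:ℂ)/2)))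
            * (-z) ^ (-((1:ℂ)/2)) := by
        rw [← intervalIntegral.integral_mul_const]
        apply intervalIntegral.integral_congr
        intro t ht
        rw [Set.uIcc_of_le (zero_le_one' ℝ)] at ht
        show (1 - (t:ℂ)*z) ^ ((1:ℂ)/2) * (-((t:ℂ) * z)) ^ (-((1:ℂ)/2))
            = (1 - (t:ℂ)*z) ^ ((1:ℂ)/2) * (t:ℂ) ^ (-((1:ℂ)/2)) * (-z) ^ (-((1:ℂ)/2))
        rcases eq_or_lt_of_le ht.1 with h0 | h0
        · simp only [← h0, Complex.ofReal_zero, zero_mul, neg_zero, mul_zero]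
          rw [Complex.zero_cpow (by norm_num : -((1:ℂ)/2) ≠ 0)]
          ring
        · have heq : -((t:ℂ) * z) = (t:ℂ) * (-z) := by ring
          rw [heq, mul_cpow_pos h0 huz, mul_assoc]
      have hH : hAux z = ∫ t in (0:ℝ)..1, (1 - (t:ℂ)*z) ^ ((1:ℂ)/2) * (t:ℂ) ^ (-((1:ℂ)/2)) := rfl
      have hphi : phiRight z = 2 * z * (hAux z * (-z) ^ (-((1:ℂ)/2))) := by
        simp only [phiRight]
        rw [hint, hH]
      show (-z * hAux z ^ 2) ^ ((1:ℂ)/2) = -(1/2 : ℂ) * phiRight z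
      rw [hfzw, sq_sqrt' hwre, hphi, Complex.cpow_neg, ← hsdef, hwdef, ← hHdef]
      have hzeq : z = -(s * s) := by rw [hss, neg_neg]
      rw [hzeq]
      field_simp
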